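/- For any two distinct bases (u,v) ≠ (u',v') in {0,1}² of 8-state encoding, and any g, g' ∈ {0,1}, the overlap satisfies |⟨u,v,g | u',v',g'⟩|² = 1/3 or 2/3; in particular the four bases of 8-state encoding are not mutually unbiased (since mutual unbiasedness for qubits requires all overlaps squared to equal 1/2). -/

import Mathlib

open Matrix Complex Finset
noncomputable def σx : Matrix (Fin 2) (Fin 2) ℂ := !![0, 1; 1, 0]
noncomputable def σz : Matrix (Fin 2) (Fin 2) ℂ := !![1, 0; 0, -1]
noncomputable def ang : ℝ := Real.arccos (1 / Real.sqrt 3)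
noncomputable def sqrtI : ℂ := Complex.exp (Real.pi * Complex.I / 4)
noncomputable def ψ8 : Fin 2 → Fin 2 → ℂ :=
  ![![(Real.cos (ang / 2) : ℂ), sqrtI * (Real.sin (ang / 2) : ℂ)],
    ![(Real.sin (ang / 2) : ℂ), -(sqrtI * (Real.cos (ang / 2) : ℂ))]]
noncomputable def state8 (u v g : Fin 2) : Fin 2 → ℂ :=
  (σz ^ (u : ℕ) * σx ^ (v : ℕ)).mulVec (ψ8 g)
/-- The squared overlap `|⟨u,v,g|u',v',g'⟩|²` between two of the eight states. -/
noncomputable def overlapSq (u v g u' v' g' : Fin 2) : ℝ :=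
  ‖∑ i : Fin 2, (starRingEnd ℂ) (state8 u v g i) * state8 u' v' g' i‖ ^ 2

noncomputable def cR : ℝ := Real.cos (ang / 2)
noncomputable def sR : ℝ := Real.sin (ang / 2)
noncomputable def qR : ℝ := Real.sqrt 2 / 2

lemma sqrtI_eq : sqrtI = (qR : ℝ) * (1 + Complex.I) := by
  have h : (Real.pi : ℂ) * Complex.I / 4 = (Real.pi / 4 : ℝ) * Complex.I := by
    push_cast; ring
  rw [sqrtI, h, Complex.exp_mul_I, ← Complex.ofReal_cos, ← Complex.ofReal_sin,
    Real.cos_pi_div_four, Real.sin_pi_div_four, qR]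
  ring

lemma p00 : ψ8 0 0 = (cR : ℂ) := by rw [ψ8, cR]; rfl
lemma p01 : ψ8 0 1 = (qR : ℂ) * (1 + Complex.I) * (sR : ℂ) := by
  rw [ψ8, sR, ← sqrtI_eq]; rfl
lemma p10 : ψ8 1 0 = (sR : ℂ) := by rw [ψ8, sR]; rfl
lemma p11 : ψ8 1 1 = -((qR : ℂ) * (1 + Complex.I) * (cR : ℂ)) := by
  rw [ψ8, cR, ← sqrtI_eq]; rfl

lemma st00 (g : Fin 2) : state8 0 0 g = ψ8 g := by
  funext i
  simp [state8, σx, σz, mulVec, dotProduct, Fin.sum_univ_two, Matrix.one_apply]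
lemma st01 (g : Fin 2) : state8 0 1 g = ![ψ8 g 1, ψ8 g 0] := by
  funext i
  fin_cases i <;>
    simp [state8, σx, σz, mulVec, dotProduct, Fin.sum_univ_two, Matrix.one_apply]
lemma st10 (g : Fin 2) : state8 1 0 g = ![ψ8 g 0, -ψ8 g 1] := by
  funext i
  fin_cases i <;>
    simp [state8, σx, σz, mulVec, dotProduct, Fin.sum_univ_two, Matrix.one_apply]
lemma st11 (g : Fin 2) : state8 1 1 g = ![ψ8 g 1, -ψ8 g 0] := by
  funext i
  fin_cases i <;>
    simp [state8, σx, σz, mulVec, dotProduct, Fin.sum_univ_two, Matrix.mul_apply,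
      Matrix.one_apply]

lemma ov_eq (u v g u' v' g' : Fin 2) : overlapSq u v g u' v' g' =
    Complex.normSq ((starRingEnd ℂ) (state8 u v g 0) * state8 u' v' g' 0 +
      (starRingEnd ℂ) (state8 u v g 1) * state8 u' v' g' 1) := by
  rw [overlapSq, Fin.sum_univ_two, Complex.sq_norm]

lemma hcR2 : cR ^ 2 = 1/2 + Real.sqrt 3/6 := by
  have h3 : Real.sqrt 3 ^ 2 = 3 := Real.sq_sqrt (by norm_num)
  have h3p : (0:ℝ) < Real.sqrt 3 := Real.sqrt_pos.2 (by norm_num)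
  have h1 : (1 : ℝ) / Real.sqrt 3 = Real.sqrt 3 / 3 := by
    rw [div_eq_div_iff h3p.ne' (by norm_num)]; nlinarith
  have h2 := Real.cos_sq (ang/2)
  rw [show 2*(ang/2) = ang by ring, ang, h1, Real.cos_arccos (by nlinarith) (by nlinarith)] at h2
  rw [cR, ang, h1, h2]; ring

lemma hsR2 : sR ^ 2 = 1/2 - Real.sqrt 3/6 := by
  have := Real.sin_sq_add_cos_sq (ang/2)
  rw [show Real.cos (ang/2) = cR from rfl, show Real.sin (ang/2) = sR from rfl] at this
  have := hcR2
  linarith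

lemma hqR2 : qR ^ 2 = 1/2 := by
  rw [qR, div_pow, Real.sq_sqrt (by norm_num : (0:ℝ) ≤ 2)]; norm_num

set_option maxHeartbeats 4000000 in
lemma key : ∀ u v u' v' : Fin 2, (u, v) ≠ (u', v') → ∀ g g' : Fin 2,
    overlapSq u v g u' v' g' = 1/3 ∨ overlapSq u v g u' v' g' = 2/3 := by
  intro u v u' v' h g g'
  have h3 : Real.sqrt 3 ^ 2 = 3 := Real.sq_sqrt (by norm_num)
  have hcc := hcR2
  have hss := hsR2
  have hq2 := hqR2
  have hc4 : cR^4 = 1/3 + Real.sqrt 3/6 := by nlinarith [hcc]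
  have hs4 : sR^4 = 1/3 - Real.sqrt 3/6 := by nlinarith [hss]
  have hcs : cR^2*sR^2 = 1/6 := by nlinarith [hcc, hss]
  have hqc4 : qR^2*cR^4 = 1/6 + Real.sqrt 3/12 := by rw [hq2, hc4]; ring
  have hqs4 : qR^2*sR^4 = 1/6 - Real.sqrt 3/12 := by rw [hq2, hs4]; ring
  have hqcs : qR^2*(cR^2*sR^2) = 1/12 := by rw [hq2, hcs]; ring
  have hqc2 : qR^2*cR^2 = 1/4 + Real.sqrt 3/12 := by rw [hq2, hcc]; ring
  have hqs2 : qR^2*sR^2 = 1/4 - Real.sqrt 3/12 := by rw [hq2, hss]; ring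
  have hq4 : qR^4 = 1/4 := by nlinarith [hq2]
  have hq4c4 : qR^4*cR^4 = 1/12 + Real.sqrt 3/24 := by rw [hq4, hc4]; ring
  have hq4s4 : qR^4*sR^4 = 1/12 - Real.sqrt 3/24 := by rw [hq4, hs4]; ring
  have hq4cs : qR^4*(cR^2*sR^2) = 1/24 := by rw [hq4, hcs]; ring
  have hq4c2 : qR^4*cR^2 = 1/8 + Real.sqrt 3/24 := by rw [hq4, hcc]; ring
  have hq4s2 : qR^4*sR^2 = 1/8 - Real.sqrt 3/24 := by rw [hq4, hss]; ring
  fin_cases u <;> fin_cases v <;> fin_cases u' <;> fin_cases v' <;>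
    first
      | exact absurd rfl h
      | ((fin_cases g <;> fin_cases g') <;> [left; right; right; left] <;>
          (rw [ov_eq]
           simp only [Fin.mk_zero, Fin.mk_one, st00, st01, st10, st11, Matrix.cons_val_zero,
             Matrix.cons_val_one, Matrix.head_cons, p00, p01, p10, p11]
           simp only [map_add, _root_.map_mul, map_neg, _root_.map_one, Complex.conj_ofReal,
             Complex.conj_I]
           simp only [Complex.normSq_apply, Complex.add_re, Complex.add_im, Complex.mul_re,
             Complex.mul_im, Complex.neg_re, Complex.neg_im, Complex.I_re, Complex.I_im,
             Complex.ofReal_re, Complex.ofReal_im, Complex.one_re, Complex.one_im,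
             Complex.sub_re, Complex.sub_im]
           ring_nf
           linarith [hc4, hs4, hcs, hqc4, hqs4, hqcs, hqc2, hqs2, hcc, hss, hq2, hq4, hq4c4, hq4s4, hq4cs, hq4c2, hq4s2]))

theorem eight_state_bases_not_mutually_unbiased :
    (∀ u v u' v' : Fin 2, (u, v) ≠ (u', v') → ∀ g g' : Fin 2,
      overlapSq u v g u' v' g' = 1/3 ∨ overlapSq u v g u' v' g' = 2/3) ∧
    ¬ (∀ u v u' v' : Fin 2, (u, v) ≠ (u', v') → ∀ g g' : Fin 2,
      overlapSq u v g u' v' g' = 1/2) := by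
  refine ⟨key, fun h => ?_⟩
  have h1 := h 0 0 0 1 (by decide) 0 0
  have h2 := key 0 0 0 1 (by decide) 0 0
  rcases h2 with h2 | h2 <;> rw [h1] at h2 <;> norm_num at h2
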